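/- Let θ₀ ∈ (0, π). For any complex θ with 0 ≤ Im(θ) ≤ π one has |S(θ)| ≤ 1, and for any complex θ with -π ≤ Im(θ) ≤ 0 one has |S(θ)| ≥ 1 (whenever S(θ) is defined, i.e. sinh θ + i sin θ₀ ≠ 0). -/

import Mathlib

open Complex

theorem abs_S_le_ge (θ₀ : ℝ) (hθ₀ : θ₀ ∈ Set.Ioo 0 Real.pi) (θ : ℂ)
    (hden : Complex.sinh θ + Complex.I * (Real.sin θ₀ : ℂ) ≠ 0) :
    (0 ≤ θ.im → θ.im ≤ Real.pi →
      ‖(Complex.sinh θ - Complex.I * (Real.sin θ₀ : ℂ)) /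
        (Complex.sinh θ + Complex.I * (Real.sin θ₀ : ℂ))‖ ≤ 1) ∧
    (-Real.pi ≤ θ.im → θ.im ≤ 0 →
      1 ≤ ‖(Complex.sinh θ - Complex.I * (Real.sin θ₀ : ℂ)) /
        (Complex.sinh θ + Complex.I * (Real.sin θ₀ : ℂ))‖) := by
  obtain ⟨h1, h2⟩ := hθ₀
  have hs : 0 < Real.sin θ₀ := Real.sin_pos_of_pos_of_lt_pi h1 h2
  set s : ℝ := Real.sin θ₀ with hsdef
  set w : ℂ := Complex.sinh θ with hw
  have hdpos : 0 < ‖w + Complex.I * (s : ℂ)‖ := norm_pos_iff.mpr hden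
  have hnum : Complex.normSq (w - Complex.I * (s : ℂ)) = w.re ^ 2 + (w.im - s) ^ 2 := by
    simp [Complex.normSq_apply, Complex.sub_re, Complex.sub_im, Complex.mul_re,
      Complex.mul_im]
    ring
  have hden' : Complex.normSq (w + Complex.I * (s : ℂ)) = w.re ^ 2 + (w.im + s) ^ 2 := by
    simp [Complex.normSq_apply, Complex.add_re, Complex.add_im, Complex.mul_re,
      Complex.mul_im]
    ring
  have hwim : w.im = Real.cosh θ.re * Real.sin θ.im := by
    rw [hw, ← Complex.re_add_im θ, Complex.sinh_add, Complex.sinh_mul_I,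
      Complex.cosh_mul_I, ← Complex.ofReal_sinh, ← Complex.ofReal_cosh,
      ← Complex.ofReal_sin, ← Complex.ofReal_cos]
    simp [Complex.add_im, Complex.mul_im, Complex.sin_ofReal_re]
  have hcosh : 0 < Real.cosh θ.re := Real.cosh_pos _
  rw [norm_div]
  constructor
  · intro ha hb
    have hsin : 0 ≤ Real.sin θ.im := Real.sin_nonneg_of_nonneg_of_le_pi ha hb
    have him : 0 ≤ w.im := by rw [hwim]; positivity
    have hsq : ‖w - Complex.I * (s : ℂ)‖ ^ 2 ≤
        ‖w + Complex.I * (s : ℂ)‖ ^ 2 := by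
      rw [Complex.sq_norm, Complex.sq_norm, hnum, hden']
      nlinarith
    rw [div_le_one hdpos]
    exact (pow_le_pow_iff_left₀ (norm_nonneg _) (norm_nonneg _)
      two_ne_zero).mp hsq
  · intro ha hb
    have hsin : Real.sin θ.im ≤ 0 := by
      have := Real.sin_nonneg_of_nonneg_of_le_pi (by linarith : (0:ℝ) ≤ -θ.im)
        (by linarith : -θ.im ≤ Real.pi)
      rw [Real.sin_neg] at this
      linarith
    have him : w.im ≤ 0 := by
      rw [hwim]
      exact mul_nonpos_of_nonneg_of_nonpos hcosh.le hsin
    have hsq : ‖w + Complex.I * (s : ℂ)‖ ^ 2 ≤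
        ‖w - Complex.I * (s : ℂ)‖ ^ 2 := by
      rw [Complex.sq_norm, Complex.sq_norm, hnum, hden']
      nlinarith
    rw [le_div_iff₀ hdpos, one_mul]
    exact (pow_le_pow_iff_left₀ (norm_nonneg _) (norm_nonneg _)
      two_ne_zero).mp hsq
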